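/- Let P_X be a distribution on 𝒳 = {1,…,k} with k ≥ 2 and P_X(i) > 0 for all i, and fix ε with 0 < ε < −log(1 − min_i P_X(i)). Define the PML-extremal mechanism P*_{Y|X} on 𝒴 = 𝒳 by P*_{Y|X=i}(j) = 1 − e^ε(1 − P_X(i)) if i = j, and P*_{Y|X=i}(j) = e^ε P_X(j) if i ≠ j. Then for all δ ∈ (0,1), the PML envelope of the joint distribution induced by P_X and P*_{Y|X} satisfies ε_c(δ) = ε. -/

import Mathlib

open Real Finset
open scoped Classical

noncomputable section

/-- Marginal distribution of the first coordinate of a joint distribution. -/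
def margX {X Y : Type} [Fintype Y] (P : X → Y → ℝ) (x : X) : ℝ := ∑ y, P x y

/-- Marginal distribution of the second coordinate of a joint distribution. -/
def margY {X Y : Type} [Fintype X] (P : X → Y → ℝ) (y : Y) : ℝ := ∑ x, P x y

/-- `P` is a joint probability distribution on `X × Y`. -/
def IsJoint {X Y : Type} [Fintype X] [Fintype Y] (P : X → Y → ℝ) : Prop :=
  (∀ x y, 0 ≤ P x y) ∧ (∑ x, ∑ y, P x y) = 1

/-- Conditional probability `P_{Y|X=x}(y)` of the second coordinate given the first. -/
def condYX {X Y : Type} [Fintype Y] (P : X → Y → ℝ) (x : X) (y : Y) : ℝ :=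
  P x y / margX P x

/-- Pointwise maximal leakage of the outcome `y`:
`ℓ(X → y) = log (max_x P_{Y|X=x}(y) / P_Y(y))`. -/
def pml {X Y : Type} [Fintype X] [Fintype Y] (P : X → Y → ℝ) (y : Y) : ℝ :=
  Real.log ((⨆ x, condYX P x y) / margY P y)

/-- `K` is a Markov kernel (a conditional distribution). -/
def IsKernel {Y Z : Type} [Fintype Z] (K : Y → Z → ℝ) : Prop :=
  (∀ y z, 0 ≤ K y z) ∧ ∀ y, (∑ z, K y z) = 1

/-- Joint distribution of `(X, Z)` obtained by post-processing `Y` with the kernel `K`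
(marginalizing out `Y`); this encodes the Markov chain `X - Y - Z`. -/
def pushKernel {X Y Z : Type} [Fintype Y] (P : X → Y → ℝ) (K : Y → Z → ℝ)
    (x : X) (z : Z) : ℝ :=
  ∑ y, P x y * K y z

/-- Left-continuous quantile of the leakage random variable:
`ubar ε_Z(δ) = inf {t ≥ 0 : ℙ(ℓ(Z) ≤ t) ≥ 1 - δ}`. -/
def ubarEps {X Z : Type} [Fintype X] [Fintype Z] (Q : X → Z → ℝ) (δ : ℝ) : ℝ :=
  sInf {t : ℝ | 0 ≤ t ∧
    1 - δ ≤ ∑ z ∈ Finset.univ.filter (fun z => pml Q z ≤ t), margY Q z}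

/-- The PML envelope: the supremum of the left-continuous leakage quantile over all
finite post-processings `Z` of `Y` (i.e., over all Markov chains `X - Y - Z`). -/
def pmlEnvelope {X Y : Type} [Fintype X] [Fintype Y] (P : X → Y → ℝ) (δ : ℝ) : ℝ :=
  sSup {e : ℝ | ∃ (n : ℕ) (K : Y → Fin n → ℝ),
    IsKernel K ∧ e = ubarEps (pushKernel P K) δ}

/-- Let `P_X` be a distribution on `{1,…,k}` (here `Fin k`) with `k ≥ 2`
and positive probabilities, and fix `ε` in the high-privacy regime
`0 < ε < -log (1 - min_i P_X(i))`. For the PML-extremal mechanism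
`P*_{Y|X=i}(j) = 1 - e^ε (1 - P_X(i))` if `i = j` and `e^ε P_X(j)` otherwise,
the PML envelope of the induced joint distribution satisfies `ε_c(δ) = ε`
for all `δ ∈ (0,1)`. -/
theorem pmlEnvelope_extremal_mechanism
    (k : ℕ) (hk : 2 ≤ k) (p : Fin k → ℝ)
    (hp : ∀ i, 0 < p i) (hpsum : ∑ i, p i = 1)
    (ε : ℝ) (hε : 0 < ε) (hεhi : ε < -Real.log (1 - ⨅ i, p i)) :
    ∀ δ ∈ Set.Ioo (0 : ℝ) 1,
      pmlEnvelope
        (fun i j : Fin k =>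
          p i * (if i = j then 1 - Real.exp ε * (1 - p i) else Real.exp ε * p j)) δ
        = ε := by
  intro δ hδ
  obtain ⟨hδ0, hδ1⟩ := hδ
  haveI : Nonempty (Fin k) := Fin.pos_iff_nonempty.mp (by omega)
  set E := Real.exp ε with hEdef
  have hE0 : 0 < E := Real.exp_pos ε
  have hE1 : 1 < E := by
    have h := Real.add_one_le_exp ε
    rw [hEdef]; linarith
  set P : Fin k → Fin k → ℝ :=
    fun i j => p i * (if i = j then 1 - E * (1 - p i) else E * p j) with hPdef
  have hplt : ∀ i, p i < 1 := by
    intro i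
    obtain ⟨j, hj⟩ := Fintype.exists_ne_of_one_lt_card (by rw [Fintype.card_fin]; omega) i
    have h1 : p i + p j ≤ ∑ x, p x := by
      calc p i + p j = ∑ x ∈ ({i, j} : Finset (Fin k)), p x := by
            rw [Finset.sum_pair (Ne.symm hj)]
        _ ≤ ∑ x, p x :=
            Finset.sum_le_sum_of_subset_of_nonneg (Finset.subset_univ _)
              (fun x _ _ => (hp x).le)
    rw [hpsum] at h1
    linarith [hp j]
  have hmle : ∀ i, (⨅ i, p i) ≤ p i := fun i => ciInf_le (Finite.bddBelow_range p) i
  have hm1 : (⨅ i, p i) < 1 := lt_of_le_of_lt (hmle ⟨0, by omega⟩) (hplt _)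
  have hdiag : ∀ i, E * (1 - p i) < 1 := by
    intro i
    have h1m : 0 < 1 - (⨅ i, p i) := by linarith
    have hlog : Real.log (1 - ⨅ i, p i) < -ε := by linarith
    have h2 : 1 - (⨅ i, p i) < Real.exp (-ε) := by
      have h3 := Real.exp_lt_exp.mpr hlog
      rwa [Real.exp_log h1m] at h3
    have h3 : E * Real.exp (-ε) = 1 := by
      rw [hEdef, ← Real.exp_add]; simp
    have h4 : 1 - p i ≤ 1 - (⨅ i, p i) := by linarith [hmle i]
    nlinarith [Real.exp_pos (-ε)]
  have htle : ∀ i j : Fin k, (if i = j then 1 - E * (1 - p i) else E * p j) ≤ E * p j := by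
    intro i j
    by_cases h : i = j
    · subst h; rw [if_pos rfl]; nlinarith
    · rw [if_neg h]
  have hPpos : ∀ i j, 0 ≤ P i j := by
    intro i j
    apply mul_nonneg (hp i).le
    by_cases h : i = j
    · rw [if_pos h]; linarith [hdiag i]
    · rw [if_neg h]; exact mul_nonneg hE0.le (hp j).le
  have hsumrow : ∀ i, ∑ j, (if i = j then 1 - E * (1 - p i) else E * p j) = 1 := by
    intro i
    rw [← Finset.add_sum_erase _ _ (Finset.mem_univ i), if_pos rfl]
    have h1 : ∑ j ∈ univ.erase i, (if i = j then 1 - E * (1 - p i) else E * p j)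
        = ∑ j ∈ univ.erase i, E * p j :=
      Finset.sum_congr rfl fun j hj => if_neg (Ne.symm (Finset.ne_of_mem_erase hj))
    rw [h1, ← Finset.mul_sum, Finset.sum_erase_eq_sub (Finset.mem_univ i), hpsum]
    ring
  have hmargX : ∀ i, margX P i = p i := by
    intro i
    simp only [margX, hPdef, ← Finset.mul_sum, hsumrow, mul_one]
  have hmargY : ∀ j, margY P j = p j := by
    intro j
    simp only [margY, hPdef]
    rw [← Finset.add_sum_erase _ _ (Finset.mem_univ j), if_pos rfl]
    have h1 : ∑ i ∈ univ.erase j, (p i * if i = j then 1 - E * (1 - p i) else E * p j)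
        = (∑ i ∈ univ.erase j, p i) * (E * p j) := by
      rw [Finset.sum_mul]
      refine Finset.sum_congr rfl fun i hi => ?_
      rw [if_neg (Finset.ne_of_mem_erase hi)]
    rw [h1, Finset.sum_erase_eq_sub (Finset.mem_univ j), hpsum]
    ring
  have hcond : ∀ i j, condYX P i j = (if i = j then 1 - E * (1 - p i) else E * p j) := by
    intro i j
    rw [condYX, hmargX]
    simp only [hPdef]
    rw [mul_comm, mul_div_assoc, div_self (hp i).ne', mul_one]
  have hsup : ∀ j, (⨆ x, condYX P x j) = E * p j := by
    intro j
    apply le_antisymm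
    · exact ciSup_le fun x => (hcond x j) ▸ htle x j
    · obtain ⟨x, hx⟩ := Fintype.exists_ne_of_one_lt_card (by rw [Fintype.card_fin]; omega) j
      have h := le_ciSup (Finite.bddAbove_range fun x => condYX P x j) x
      rwa [hcond x j, if_neg hx] at h
  have hpml : ∀ j, pml P j = ε := by
    intro j
    rw [pml, hsup, hmargY, mul_div_assoc, div_self (hp j).ne', mul_one, hEdef,
      Real.log_exp]
  have hubarP : ubarEps P δ = ε := by
    have hset : {t : ℝ | 0 ≤ t ∧
        1 - δ ≤ ∑ z ∈ Finset.univ.filter (fun z => pml P z ≤ t), margY P z}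
        = Set.Ici ε := by
      ext t
      simp only [Set.mem_setOf_eq, Set.mem_Ici]
      constructor
      · rintro ⟨ht0, htm⟩
        by_contra h
        push_neg at h
        rw [Finset.filter_false_of_mem
          (fun z _ => by rw [hpml z]; exact not_le.mpr h)] at htm
        simp only [Finset.sum_empty] at htm
        linarith
      · intro ht
        refine ⟨le_trans hε.le ht, ?_⟩
        rw [Finset.filter_true_of_mem (fun z _ => by rw [hpml z]; exact ht)]
        have h1 : ∑ z, margY P z = 1 := by
          rw [Finset.sum_congr rfl fun z _ => hmargY z, hpsum]
        rw [h1]; linarith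
    rw [ubarEps, hset, csInf_Ici]
  have hgen : ∀ (n : ℕ) (K : Fin k → Fin n → ℝ), IsKernel K →
      ubarEps (pushKernel P K) δ ≤ ε := by
    intro n K hK
    obtain ⟨hK0, hK1⟩ := hK
    set Q := pushKernel P K with hQdef
    have hQ : ∀ x z, Q x z = ∑ y, P x y * K y z := fun x z => rfl
    have hQmargX : ∀ x, margX Q x = p x := by
      intro x
      calc margX Q x = ∑ y, ∑ z, P x y * K y z := Finset.sum_comm
        _ = ∑ y, P x y := Finset.sum_congr rfl fun y _ => by
            rw [← Finset.mul_sum, hK1 y, mul_one]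
        _ = p x := hmargX x
    have hMY : ∀ z, margY Q z = ∑ y, p y * K y z := by
      intro z
      calc margY Q z = ∑ y, ∑ x, P x y * K y z := Finset.sum_comm
        _ = ∑ y, (∑ x, P x y) * K y z :=
            Finset.sum_congr rfl fun y _ => (Finset.sum_mul _ _ _).symm
        _ = ∑ y, p y * K y z := Finset.sum_congr rfl fun y _ => by
            rw [show (∑ x, P x y) = p y from hmargY y]
    have hMnn : ∀ z, 0 ≤ ∑ y, p y * K y z := fun z =>
      Finset.sum_nonneg fun y _ => mul_nonneg (hp y).le (hK0 y z)
    have hQle : ∀ x z, Q x z ≤ p x * (E * ∑ y, p y * K y z) := by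
      intro x z
      calc Q x z = ∑ y, P x y * K y z := hQ x z
        _ ≤ ∑ y, p x * E * (p y * K y z) := by
            refine Finset.sum_le_sum fun y _ => ?_
            have h1 : P x y ≤ p x * (E * p y) := by
              simp only [hPdef]
              exact mul_le_mul_of_nonneg_left (htle x y) (hp x).le
            have h2 := mul_le_mul_of_nonneg_right h1 (hK0 y z)
            calc P x y * K y z ≤ p x * (E * p y) * K y z := h2
              _ = p x * E * (p y * K y z) := by ring
        _ = p x * (E * ∑ y, p y * K y z) := by rw [← Finset.mul_sum]; ring
    have hQnn : ∀ x z, 0 ≤ Q x z := fun x z =>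
      Finset.sum_nonneg fun y _ => mul_nonneg (hPpos x y) (hK0 y z)
    have hpmlQ : ∀ z, pml Q z ≤ ε := by
      intro z
      rw [pml, hMY z]
      set M := ∑ y, p y * K y z with hMdef
      have hS : (⨆ x, condYX Q x z) ≤ E * M := by
        apply ciSup_le
        intro x
        rw [condYX, hQmargX, div_le_iff₀ (hp x)]
        calc Q x z ≤ p x * (E * M) := hQle x z
          _ = E * M * p x := by ring
      have hSnn : 0 ≤ (⨆ x, condYX Q x z) := by
        refine le_ciSup_of_le (Finite.bddAbove_range _) (Classical.arbitrary (Fin k)) ?_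
        rw [condYX, hQmargX]
        exact div_nonneg (hQnn _ z) (hp _).le
      have hMnn' : (0:ℝ) ≤ M := hMnn z
      rcases eq_or_lt_of_le hMnn' with hM0 | hM0
      · rw [← hM0, div_zero, Real.log_zero]; exact hε.le
      · have hdiv : (⨆ x, condYX Q x z) / M ≤ E := by
          rw [div_le_iff₀ hM0]; exact hS
        rcases eq_or_lt_of_le (div_nonneg hSnn hM0.le) with h0 | h0
        · rw [← h0, Real.log_zero]; exact hε.le
        · rw [hEdef] at hdiv
          exact (Real.log_le_iff_le_exp h0).mpr hdiv
    have htotalQ : ∑ z, margY Q z = 1 := by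
      calc ∑ z, margY Q z = ∑ z, ∑ y, p y * K y z :=
            Finset.sum_congr rfl fun z _ => hMY z
        _ = ∑ y, ∑ z, p y * K y z := Finset.sum_comm
        _ = ∑ y, p y := Finset.sum_congr rfl fun y _ => by
            rw [← Finset.mul_sum, hK1 y, mul_one]
        _ = 1 := hpsum
    rw [ubarEps]
    apply csInf_le ⟨0, fun t ht => ht.1⟩
    refine ⟨hε.le, ?_⟩
    rw [Finset.filter_true_of_mem (fun z _ => hpmlQ z), htotalQ]
    linarith
  have hKid : IsKernel (fun (y z : Fin k) => if y = z then (1 : ℝ) else 0) := by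
    constructor
    · intro y z; by_cases h : y = z <;> simp [h]
    · intro y; simp
  have hpush : pushKernel P (fun (y z : Fin k) => if y = z then (1 : ℝ) else 0) = P := by
    funext x z
    rw [pushKernel]
    simp [mul_ite, mul_one, mul_zero]
  rw [pmlEnvelope]
  apply IsGreatest.csSup_eq
  constructor
  · exact ⟨k, _, hKid, by rw [hpush, hubarP]⟩
  · rintro e ⟨n, K, hK, rfl⟩
    exact hgen n K hK
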